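/- arXiv:2101.08099 — 4 statements merged into one kernel-verified Lean document; each statement's English description precedes it below -/
import Mathlib

section
/- For p ≥ 2 and any vectors w₁, w₂ ∈ ℝⁿ, one has |w₂|^p ≥ |w₁|^p + p|w₁|^{p-2}⟨w₁, w₂ - w₁⟩ + |w₂ - w₁|^p/(2^{p-1} - 1). -/
open Real

lemma aux_add_rpow (x y r : ℝ) (hx : 0 ≤ x) (hy : 0 ≤ y) (hr : 1 ≤ r) :
    x ^ r + y ^ r ≤ (x + y) ^ r := by
  have := NNReal.add_rpow_le_rpow_add (⟨x, hx⟩ : NNReal) (⟨y, hy⟩ : NNReal) hr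
  exact_mod_cast this

lemma aux_mid (s t r : ℝ) (hs : 0 ≤ s) (ht : 0 ≤ t) (hr : 1 ≤ r) :
    ((s + t) / 2) ^ r ≤ (s ^ r + t ^ r) / 2 := by
  have h := (convexOn_rpow hr).2 (Set.mem_Ici.2 hs) (Set.mem_Ici.2 ht)
    (by norm_num : (0:ℝ) ≤ 1/2) (by norm_num : (0:ℝ) ≤ 1/2) (by norm_num)
  simp only [smul_eq_mul] at h
  calc ((s + t) / 2) ^ r = (1/2 * s + 1/2 * t) ^ r := by ring_nf
    _ ≤ 1/2 * s ^ r + 1/2 * t ^ r := h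
    _ = (s ^ r + t ^ r) / 2 := by ring

lemma aux_grad (a t r : ℝ) (ha : 0 ≤ a) (ht : 0 ≤ t) (hr : 1 ≤ r) :
    a ^ r + r * a ^ (r - 1) * (t - a) ≤ t ^ r := by
  rcases eq_or_lt_of_le ha with h0 | ha'
  · rw [← h0]
    rw [Real.zero_rpow (by linarith : r ≠ 0)]
    rcases eq_or_lt_of_le hr with h1 | hr'
    · simp [← h1, ht]
    · rw [Real.zero_rpow (by linarith : r - 1 ≠ 0)]
      simp [Real.rpow_nonneg ht]
  · have hs : -1 ≤ t / a - 1 := by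
      have : 0 ≤ t / a := div_nonneg ht ha
      linarith
    have hb := one_add_mul_self_le_rpow_one_add hs hr
    rw [add_sub_cancel] at hb
    have hb2 := mul_le_mul_of_nonneg_left hb (Real.rpow_nonneg ha r)
    rw [← Real.mul_rpow ha (by positivity), mul_div_cancel₀ _ (ne_of_gt ha')] at hb2
    calc a ^ r + r * a ^ (r - 1) * (t - a)
        = a ^ r * (1 + r * (t / a - 1)) := by
          rw [Real.rpow_sub ha', Real.rpow_one]; field_simp
      _ ≤ t ^ r := hb2

lemma aux_sq_rpow (x : ℝ) (hx : 0 ≤ x) (p : ℝ) : (x ^ 2) ^ (p / 2) = x ^ p := by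
  rw [← Real.rpow_natCast x 2, ← Real.rpow_mul hx]
  congr 1; ring

lemma aux_clarkson {n : ℕ} (p : ℝ) (hp : 2 ≤ p) (a b : EuclideanSpace ℝ (Fin n)) :
    ‖(1/2 : ℝ) • (a + b)‖ ^ p + ‖(1/2 : ℝ) • (a - b)‖ ^ p ≤ (‖a‖ ^ p + ‖b‖ ^ p) / 2 := by
  set u := ‖(1/2 : ℝ) • (a + b)‖ with hu
  set v := ‖(1/2 : ℝ) • (a - b)‖ with hv
  have hu0 : 0 ≤ u := norm_nonneg _
  have hv0 : 0 ≤ v := norm_nonneg _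
  have hpar : u ^ 2 + v ^ 2 = (‖a‖ ^ 2 + ‖b‖ ^ 2) / 2 := by
    have h := parallelogram_law_with_norm ℝ a b
    rw [hu, hv, norm_smul, norm_smul]
    simp only [norm_div, norm_one, Real.norm_ofNat, norm_one]
    rw [mul_pow, mul_pow]
    nlinarith [h]
  have h2 : (1:ℝ) ≤ p / 2 := by linarith
  calc u ^ p + v ^ p = (u ^ 2) ^ (p/2) + (v ^ 2) ^ (p/2) := by
        rw [aux_sq_rpow u hu0, aux_sq_rpow v hv0]
    _ ≤ (u ^ 2 + v ^ 2) ^ (p/2) := aux_add_rpow _ _ _ (by positivity) (by positivity) h2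
    _ = ((‖a‖ ^ 2 + ‖b‖ ^ 2) / 2) ^ (p/2) := by rw [hpar]
    _ ≤ ((‖a‖ ^ 2) ^ (p/2) + (‖b‖ ^ 2) ^ (p/2)) / 2 :=
        aux_mid _ _ _ (by positivity) (by positivity) h2
    _ = (‖a‖ ^ p + ‖b‖ ^ p) / 2 := by
        rw [aux_sq_rpow _ (norm_nonneg a), aux_sq_rpow _ (norm_nonneg b)]

lemma aux_grad_vec {n : ℕ} (p : ℝ) (hp : 2 ≤ p) (a b : EuclideanSpace ℝ (Fin n)) :
    0 ≤ ‖b‖ ^ p - ‖a‖ ^ p - p * ‖a‖ ^ (p - 2) * (inner ℝ a (b - a) : ℝ) := by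
  rcases eq_or_ne a 0 with rfl | ha
  · simp [Real.zero_rpow (by linarith : p ≠ 0), Real.rpow_nonneg (norm_nonneg b)]
  · have ha' : 0 < ‖a‖ := norm_pos_iff.2 ha
    have hib : (inner ℝ a (b - a) : ℝ) = inner ℝ a b - ‖a‖ ^ 2 := by
      rw [inner_sub_right, real_inner_self_eq_norm_sq]
    have hcs : (inner ℝ a b : ℝ) ≤ ‖a‖ * ‖b‖ := real_inner_le_norm a b
    have hcoef : 0 ≤ p * ‖a‖ ^ (p - 2) := by positivity
    have key := aux_grad ‖a‖ ‖b‖ p (norm_nonneg a) (norm_nonneg b) (by linarith)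
    have h1 : ‖a‖ ^ (p - 2) * ‖a‖ = ‖a‖ ^ (p - 1) := by
      have : ‖a‖ ^ (p-1) = ‖a‖ ^ (p-2) * ‖a‖ ^ (1:ℝ) := by
        rw [← Real.rpow_add ha']; ring_nf
      rw [this, Real.rpow_one]
    have h2 : ‖a‖ ^ (p - 1) * ‖a‖ = ‖a‖ ^ p := by
      have : ‖a‖ ^ p = ‖a‖ ^ (p-1) * ‖a‖ ^ (1:ℝ) := by
        rw [← Real.rpow_add ha']; ring_nf
      rw [this, Real.rpow_one]
    have hmul : p * ‖a‖ ^ (p-2) * (inner ℝ a (b-a) : ℝ)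
        ≤ p * ‖a‖ ^ (p-2) * (‖a‖ * ‖b‖ - ‖a‖ ^ 2) := by
      apply mul_le_mul_of_nonneg_left _ hcoef
      rw [hib]; linarith
    have hexp : p * ‖a‖ ^ (p-2) * (‖a‖ * ‖b‖ - ‖a‖ ^ 2)
        = p * ‖a‖ ^ (p-1) * (‖b‖ - ‖a‖) := by
      linear_combination p * (‖b‖ - ‖a‖) * h1
    rw [hexp] at hmul
    linarith

lemma aux_key {n : ℕ} (p : ℝ) (hp : 2 ≤ p) : ∀ (k : ℕ) (a b : EuclideanSpace ℝ (Fin n)),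
    (1 - ((2:ℝ)^(1-p))^k) * ‖b - a‖ ^ p
      ≤ ((2:ℝ)^(p-1) - 1) * (‖b‖ ^ p - ‖a‖ ^ p - p * ‖a‖ ^ (p - 2) * (inner ℝ a (b - a) : ℝ)) := by
  set r : ℝ := (2:ℝ)^(1-p) with hr_def
  have hr0 : 0 < r := Real.rpow_pos_of_pos (by norm_num) _
  have hrq : r * (2:ℝ)^(p-1) = 1 := by
    rw [hr_def, ← Real.rpow_add (by norm_num : (0:ℝ) < 2)]
    norm_num
  have hq0 : 0 < (2:ℝ)^(p-1) - 1 := by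
    have h1 : (2:ℝ)^(1:ℝ) ≤ (2:ℝ)^(p-1) :=
      Real.rpow_le_rpow_of_exponent_le (by norm_num) (by linarith)
    rw [Real.rpow_one] at h1
    linarith
  have hs : ((1:ℝ)/2)^p = r/2 := by
    rw [hr_def, show (1:ℝ)-p = 1 + (-p) by ring,
      Real.rpow_add (by norm_num : (0:ℝ) < 2), Real.rpow_one,
      Real.rpow_neg (by norm_num : (0:ℝ) ≤ 2),
      one_div, Real.inv_rpow (by norm_num : (0:ℝ) ≤ 2)]
    ring
  intro k
  induction k with
  | zero =>
    intro a b
    simp only [pow_zero, sub_self, zero_mul]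
    exact mul_nonneg hq0.le (aux_grad_vec p hp a b)
  | succ k ih =>
    intro a b
    set m := (1/2 : ℝ) • (a + b) with hm_def
    have hm1 : m - a = (1/2 : ℝ) • (b - a) := by
      rw [hm_def]; module
    have hm2 : ‖m - a‖ ^ p = r/2 * ‖b - a‖ ^ p := by
      rw [hm1, norm_smul, Real.mul_rpow (by positivity) (norm_nonneg _)]
      simp only [norm_div, norm_one, Real.norm_ofNat]
      rw [hs]
    have hm3 : ‖(1/2 : ℝ) • (a - b)‖ ^ p = r/2 * ‖b - a‖ ^ p := by
      rw [norm_smul, Real.mul_rpow (by positivity) (norm_nonneg _)]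
      simp only [norm_div, norm_one, Real.norm_ofNat]
      rw [hs, norm_sub_rev]
    have hin : (inner ℝ a (m - a) : ℝ) = (1/2) * (inner ℝ a (b - a) : ℝ) := by
      rw [hm1, real_inner_smul_right]
    have hIH := ih a m
    rw [hm2, hin] at hIH
    have hC := aux_clarkson p hp a b
    rw [hm3] at hC
    have hC2 : ((2:ℝ)^(p-1) - 1) * (‖m‖ ^ p + r/2 * ‖b - a‖ ^ p)
        ≤ ((2:ℝ)^(p-1) - 1) * ((‖a‖ ^ p + ‖b‖ ^ p) / 2) :=
      mul_le_mul_of_nonneg_left hC hq0.le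
    have tgt : (1 - r^(k+1)) * ‖b - a‖ ^ p
        = (1 - r^k) * (r/2 * ‖b - a‖ ^ p) * 2
          + ((2:ℝ)^(p-1) - 1) * (r/2 * ‖b - a‖ ^ p) * 2 := by
      linear_combination (-(‖b - a‖ ^ p)) * hrq
    rw [tgt]
    nlinarith [hIH, hC2]

theorem convexity_ineq_p_ge_two (n : ℕ) (p : ℝ) (hp : 2 ≤ p)
    (w₁ w₂ : EuclideanSpace ℝ (Fin n)) :
    ‖w₂‖ ^ p ≥ ‖w₁‖ ^ p
      + p * ‖w₁‖ ^ (p - 2) * (inner ℝ w₁ (w₂ - w₁) : ℝ)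
      + ‖w₂ - w₁‖ ^ p / (2 ^ (p - 1) - 1) := by
  set r : ℝ := (2:ℝ)^(1-p) with hr_def
  have hr0 : 0 ≤ r := (Real.rpow_pos_of_pos (by norm_num) _).le
  have hr1 : r < 1 := Real.rpow_lt_one_of_one_lt_of_neg (by norm_num) (by linarith)
  have hq0 : 0 < (2:ℝ)^(p-1) - 1 := by
    have h1 : (2:ℝ)^(1:ℝ) ≤ (2:ℝ)^(p-1) :=
      Real.rpow_le_rpow_of_exponent_le (by norm_num) (by linarith)
    rw [Real.rpow_one] at h1
    linarith
  set A := ‖w₂ - w₁‖ ^ p with hA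
  set J := ‖w₂‖ ^ p - ‖w₁‖ ^ p - p * ‖w₁‖ ^ (p - 2) * (inner ℝ w₁ (w₂ - w₁) : ℝ) with hJ
  have hk : ∀ k : ℕ, (1 - r^k) * A ≤ ((2:ℝ)^(p-1) - 1) * J := fun k => aux_key p hp k w₁ w₂
  have htend : Filter.Tendsto (fun k : ℕ => (1 - r^k) * A) Filter.atTop (nhds ((1 - 0) * A)) :=
    (Filter.Tendsto.const_sub 1 (tendsto_pow_atTop_nhds_zero_of_lt_one hr0 hr1)).mul_const A
  have hle : (1 - 0) * A ≤ ((2:ℝ)^(p-1) - 1) * J := le_of_tendsto' htend hk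
  rw [sub_zero, one_mul] at hle
  have : A / ((2:ℝ)^(p-1) - 1) ≤ J := (div_le_iff₀ hq0).2 (by linarith [hle, mul_comm ((2:ℝ)^(p-1) - 1) J])
  rw [hJ] at this
  linarith
end

section
/- For 1 < p < 2 there exists a constant C(p) > 0 such that for all vectors w₁, w₂ ∈ ℝⁿ not both zero: |w₂|^p ≥ |w₁|^p + p|w₁|^{p-2}⟨w₁, w₂ - w₁⟩ + C(p)·|w₂ - w₁|²/(|w₁| + |w₂|)^{2-p}. -/
open Real NNReal

-- subadditivity of rpow for exponent in (0,1]
lemma aux_subadd {q : ℝ} (hq0 : 0 ≤ q) (hq1 : q ≤ 1) {a b : ℝ} (ha : 0 ≤ a) (hb : 0 ≤ b) :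
    (a + b) ^ q ≤ a ^ q + b ^ q := by
  have := NNReal.rpow_add_le_add_rpow (a.toNNReal) (b.toNNReal) hq0 hq1
  have h2 : ((a.toNNReal + b.toNNReal : ℝ≥0) : ℝ) = a + b := by
    simp [Real.coe_toNNReal, ha, hb]
  calc (a + b) ^ q = (((a.toNNReal + b.toNNReal : ℝ≥0) : ℝ)) ^ q := by rw [h2]
    _ = (((a.toNNReal + b.toNNReal : ℝ≥0) ^ q : ℝ≥0) : ℝ) := by
        rw [← NNReal.coe_rpow]
    _ ≤ (((a.toNNReal ^ q + b.toNNReal ^ q : ℝ≥0)) : ℝ) := by exact_mod_cast this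
    _ = a ^ q + b ^ q := by
        push_cast [← NNReal.coe_rpow]
        simp [Real.coe_toNNReal, ha, hb]

-- L2: a^(p-1) - b^(p-1) ≥ (p-1)(a-b)(a+b)^(p-2)
lemma aux_L2 {p : ℝ} (hp1 : 1 < p) (hp2 : p < 2) {a b : ℝ} (hb : 0 ≤ b) (hba : b ≤ a) :
    (p - 1) * (a - b) * (a + b) ^ (p - 2) ≤ a ^ (p - 1) - b ^ (p - 1) := by
  have ha : 0 ≤ a := hb.trans hba
  rcases eq_or_lt_of_le ha with h | hA
  · -- a = 0, so b = 0
    have hb0 : b = 0 := le_antisymm (hba.trans_eq h.symm) hb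
    subst hb0
    rw [← h]
    simp
  · -- a > 0
    have hab : 0 < a + b := by linarith
    have key : b ^ (p - 1) * a ^ (2 - p) ≤ (p - 1) * b + (2 - p) * a :=
      Real.geom_mean_le_arith_mean2_weighted (by linarith) (by linarith) hb ha (by ring)
    have hmono : a ^ (p - 1) - b ^ (p - 1) ≥ 0 := by
      have := Real.rpow_le_rpow hb hba (by linarith : (0:ℝ) ≤ p - 1)
      linarith
    have hbase : a ^ (2 - p) ≤ (a + b) ^ (2 - p) :=
      Real.rpow_le_rpow ha (by linarith) (by linarith)
    have haa : a ^ (p - 1) * a ^ (2 - p) = a := by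
      rw [← Real.rpow_add hA]; norm_num
    have step : (p - 1) * (a - b) ≤ (a ^ (p - 1) - b ^ (p - 1)) * (a + b) ^ (2 - p) := by
      have h1 : (a ^ (p - 1) - b ^ (p - 1)) * a ^ (2 - p)
          ≤ (a ^ (p - 1) - b ^ (p - 1)) * (a + b) ^ (2 - p) :=
        mul_le_mul_of_nonneg_left hbase hmono
      have h2 : (a ^ (p - 1) - b ^ (p - 1)) * a ^ (2 - p)
          = a - b ^ (p - 1) * a ^ (2 - p) := by rw [sub_mul, haa]
      nlinarith [key]
    have hpow : (a + b) ^ (p - 2) = ((a + b) ^ (2 - p))⁻¹ := by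
      rw [← Real.rpow_neg hab.le]; norm_num
    have hpos : 0 < (a + b) ^ (2 - p) := Real.rpow_pos_of_pos hab _
    rw [hpow]
    rw [mul_inv_le_iff₀ hpos]
    linarith [step]

lemma aux_rpow_succ {x a : ℝ} (hx : x ≠ 0) (hx1 : x + 1 ≠ 0) (ha : 0 ≤ a) :
    a ^ x * a = a ^ (x + 1) := by
  rcases eq_or_lt_of_le ha with h | h
  · rw [← h, Real.zero_rpow hx, Real.zero_rpow hx1, zero_mul]
  · rw [Real.rpow_add_one h.ne' x]

-- endpoint 1 aux: assuming b ≤ a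
lemma aux_EP1' {p : ℝ} (hp1 : 1 < p) (hp2 : p < 2) {a b : ℝ} (hb : 0 ≤ b) (hba : b ≤ a) :
    (p - 1) * (a - b) ^ 2 * (a + b) ^ (p - 2)
      ≤ a ^ p + b ^ p - (a ^ (p - 2) + b ^ (p - 2)) * (a * b) := by
  have ha : 0 ≤ a := hb.trans hba
  have e1 : a ^ (p-2) * a = a ^ (p-1) := by
    have := aux_rpow_succ (x := p-2) (a := a) (by linarith) (by intro h; apply absurd h; ring_nf; intro h2; nlinarith) ha
    rw [this]; ring_nf
  have e2 : b ^ (p-2) * b = b ^ (p-1) := by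
    have := aux_rpow_succ (x := p-2) (a := b) (by linarith) (by intro h; nlinarith) hb
    rw [this]; ring_nf
  have e3 : a ^ (p-1) * a = a ^ p := by
    have := aux_rpow_succ (x := p-1) (a := a) (by linarith) (by intro h; nlinarith) ha
    rw [this]; ring_nf
  have e4 : b ^ (p-1) * b = b ^ p := by
    have := aux_rpow_succ (x := p-1) (a := b) (by linarith) (by intro h; nlinarith) hb
    rw [this]; ring_nf
  have hL2 := aux_L2 hp1 hp2 hb hba
  -- (p-1)(a-b)^2 (a+b)^(p-2) ≤ (a^(p-1)-b^(p-1))*(a-b)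
  have step : (p - 1) * (a - b) ^ 2 * (a + b) ^ (p - 2)
      ≤ (a ^ (p-1) - b ^ (p-1)) * (a - b) := by
    have := mul_le_mul_of_nonneg_right hL2 (by linarith : (0:ℝ) ≤ a - b)
    nlinarith [this]
  have expand : (a ^ (p-1) - b ^ (p-1)) * (a - b)
      = a ^ p + b ^ p - (a ^ (p - 2) + b ^ (p - 2)) * (a * b) := by
    have h1 : a ^ (p-2) * (a * b) = a ^ (p-1) * b := by rw [← mul_assoc, e1]
    have h2 : b ^ (p-2) * (a * b) = b ^ (p-1) * a := by
      rw [mul_comm a b, ← mul_assoc, e2]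
    nlinarith [e3, e4, h1, h2]
  linarith [step, expand.le]

lemma aux_EP1 {p : ℝ} (hp1 : 1 < p) (hp2 : p < 2) {a b : ℝ} (ha : 0 ≤ a) (hb : 0 ≤ b) :
    (p - 1) * (a - b) ^ 2 * (a + b) ^ (p - 2)
      ≤ a ^ p + b ^ p - (a ^ (p - 2) + b ^ (p - 2)) * (a * b) := by
  rcases le_total b a with h | h
  · exact aux_EP1' hp1 hp2 hb h
  · have := aux_EP1' hp1 hp2 ha h
    have h1 : (b - a) ^ 2 = (a - b) ^ 2 := by ring
    have h2 : b + a = a + b := by ring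
    rw [h1, h2] at this
    linarith [this]

lemma aux_EP2 {p : ℝ} (hp1 : 1 < p) (hp2 : p < 2) {a b : ℝ} (ha : 0 ≤ a) (hb : 0 ≤ b) :
    (p - 1) * (a + b) ^ 2 * (a + b) ^ (p - 2)
      ≤ a ^ p + b ^ p + (a ^ (p - 2) + b ^ (p - 2)) * (a * b) := by
  have e1 : a ^ (p-2) * a = a ^ (p-1) := by
    have := aux_rpow_succ (x := p-2) (a := a) (by linarith) (by intro h; nlinarith) ha
    rw [this]; ring_nf
  have e2 : b ^ (p-2) * b = b ^ (p-1) := by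
    have := aux_rpow_succ (x := p-2) (a := b) (by linarith) (by intro h; nlinarith) hb
    rw [this]; ring_nf
  have e3 : a ^ (p-1) * a = a ^ p := by
    have := aux_rpow_succ (x := p-1) (a := a) (by linarith) (by intro h; nlinarith) ha
    rw [this]; ring_nf
  have e4 : b ^ (p-1) * b = b ^ p := by
    have := aux_rpow_succ (x := p-1) (a := b) (by linarith) (by intro h; nlinarith) hb
    rw [this]; ring_nf
  rcases eq_or_lt_of_le (by positivity : (0:ℝ) ≤ a + b) with h | hab
  · -- a + b = 0 so a = b = 0
    have ha0 : a = 0 := by linarith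
    have hb0 : b = 0 := by linarith
    subst ha0; subst hb0
    simp [Real.zero_rpow (show p ≠ 0 by linarith)]
  · -- (a+b)^2 * (a+b)^(p-2) = (a+b)^p
    have hsq : (a + b) ^ 2 * (a + b) ^ (p - 2) = (a + b) ^ p := by
      rw [← Real.rpow_two, ← Real.rpow_add hab]; ring_nf
    have hsub : (a + b) ^ (p - 1) ≤ a ^ (p-1) + b ^ (p-1) :=
      aux_subadd (by linarith) (by linarith) ha hb
    have hmul : (a + b) ^ (p - 1) * (a + b) = (a + b) ^ p := by
      have := aux_rpow_succ (x := p-1) (a := a + b) (show p-1 ≠ 0 by linarith) (show p-1+1 ≠ 0 by intro h; nlinarith) hab.le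
      rw [this]; ring_nf
    have h1 : a ^ (p-2) * (a * b) = a ^ (p-1) * b := by rw [← mul_assoc, e1]
    have h2 : b ^ (p-2) * (a * b) = b ^ (p-1) * a := by rw [mul_comm a b, ← mul_assoc, e2]
    have key : (a + b) ^ p ≤ a ^ p + b ^ p + (a ^ (p - 2) + b ^ (p - 2)) * (a * b) := by
      have := mul_le_mul_of_nonneg_right hsub hab.le
      rw [hmul] at this
      nlinarith [this, e3, e4, h1, h2]
    have hp' : (p - 1) * (a + b) ^ 2 * (a + b) ^ (p - 2) ≤ (a + b) ^ p := by
      rw [mul_assoc, hsq]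
      nlinarith [Real.rpow_nonneg (by positivity : (0:ℝ) ≤ a + b) p]
    linarith

lemma aux_KEY {p : ℝ} (hp1 : 1 < p) (hp2 : p < 2) {a b I : ℝ} (ha : 0 ≤ a) (hb : 0 ≤ b)
    (hI1 : -(a * b) ≤ I) (hI2 : I ≤ a * b) :
    (p - 1) * (a ^ 2 + b ^ 2 - 2 * I) * (a + b) ^ (p - 2)
      ≤ a ^ p + b ^ p - (a ^ (p - 2) + b ^ (p - 2)) * I := by
  set P := (a + b) ^ (p - 2) with hP
  set Q := a ^ (p - 2) + b ^ (p - 2) with hQ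
  have hEP1 := aux_EP1 hp1 hp2 ha hb
  have hEP2 := aux_EP2 hp1 hp2 ha hb
  -- A ≥ B * (a*b) and A ≥ -(B * (a*b)), where A, B as below
  set A := a ^ p + b ^ p - (p - 1) * (a ^ 2 + b ^ 2) * P with hA
  set B := Q - 2 * (p - 1) * P with hB
  have h1 : B * (a * b) ≤ A := by
    rw [hA, hB]; nlinarith [hEP1]
  have h2 : -(B * (a * b)) ≤ A := by
    rw [hA, hB]; nlinarith [hEP2]
  have goal : B * I ≤ A := by
    rcases le_total 0 B with hBpos | hBneg
    · calc B * I ≤ B * (a * b) := mul_le_mul_of_nonneg_left hI2 hBpos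
        _ ≤ A := h1
    · calc B * I ≤ B * (-(a * b)) := by nlinarith
        _ = -(B * (a * b)) := by ring
        _ ≤ A := h2
  rw [hA, hB] at goal
  nlinarith [goal]

variable {E : Type*} [NormedAddCommGroup E] [InnerProductSpace ℝ E]

lemma aux_STAR {p : ℝ} (hp1 : 1 < p) (hp2 : p < 2) (x y : E) :
    (p - 1) * ‖x - y‖ ^ 2 * (‖x‖ + ‖y‖) ^ (p - 2)
      ≤ ‖x‖ ^ (p - 2) * (inner ℝ x (x - y) : ℝ) - ‖y‖ ^ (p - 2) * (inner ℝ y (x - y) : ℝ) := by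
  have habs : |(inner ℝ x y : ℝ)| ≤ ‖x‖ * ‖y‖ := abs_real_inner_le_norm x y
  rw [abs_le] at habs
  have hkey := aux_KEY hp1 hp2 (norm_nonneg x) (norm_nonneg y) habs.1 habs.2
  have hx2 : ‖x‖ ^ (p - 2) * (‖x‖ : ℝ) ^ 2 = ‖x‖ ^ p := by
    rcases eq_or_lt_of_le (norm_nonneg x) with h | h
    · rw [← h, Real.zero_rpow (show p - 2 ≠ 0 by intro h'; nlinarith),
        Real.zero_rpow (show p ≠ 0 by intro h'; nlinarith), zero_mul]
    · rw [← Real.rpow_two, ← Real.rpow_add h]; ring_nf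
  have hy2 : ‖y‖ ^ (p - 2) * (‖y‖ : ℝ) ^ 2 = ‖y‖ ^ p := by
    rcases eq_or_lt_of_le (norm_nonneg y) with h | h
    · rw [← h, Real.zero_rpow (show p - 2 ≠ 0 by intro h'; nlinarith),
        Real.zero_rpow (show p ≠ 0 by intro h'; nlinarith), zero_mul]
    · rw [← Real.rpow_two, ← Real.rpow_add h]; ring_nf
  have hnorm : ‖x - y‖ ^ 2 = ‖x‖ ^ 2 - 2 * (inner ℝ x y : ℝ) + ‖y‖ ^ 2 :=
    norm_sub_sq_real x y
  have hix : (inner ℝ x (x - y) : ℝ) = ‖x‖ ^ 2 - (inner ℝ x y : ℝ) := by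
    rw [inner_sub_right, real_inner_self_eq_norm_sq]
  have hiy : (inner ℝ y (x - y) : ℝ) = (inner ℝ x y : ℝ) - ‖y‖ ^ 2 := by
    rw [inner_sub_right, real_inner_self_eq_norm_sq, real_inner_comm]
  rw [hnorm, hix, hiy]
  nlinarith [hkey, hx2, hy2]

lemma aux_hasDeriv {p : ℝ} (hp1 : 1 < p) (hp2 : p < 2) (w δ : E) (t : ℝ) :
    HasDerivAt (fun s : ℝ => ‖w + s • δ‖ ^ p)
      (p * ‖w + t • δ‖ ^ (p - 2) * (inner ℝ (w + t • δ) δ : ℝ)) t := by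
  have hp0 : p ≠ 0 := by linarith
  have hc : HasDerivAt (fun s : ℝ => w + s • δ) δ t := by
    have h1 : HasDerivAt (fun s : ℝ => s • δ) ((1:ℝ) • δ) t := (hasDerivAt_id t).smul_const δ
    rw [one_smul] at h1
    exact h1.const_add w
  by_cases huz : w + t • δ = 0
  · -- derivative is 0 at a zero of the curve
    have hval : p * ‖w + t • δ‖ ^ (p - 2) * (inner ℝ (w + t • δ) δ : ℝ) = 0 := by
      rw [huz]; simp
    rw [hval]
    have hwe : ∀ s : ℝ, w + s • δ = (s - t) • δ := by
      intro s
      have hw : w = -(t • δ) := eq_neg_of_add_eq_zero_left huz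
      rw [hw, sub_smul]; abel
    have hfeq : (fun s : ℝ => ‖w + s • δ‖ ^ p) = fun s : ℝ => (|s - t| * ‖δ‖) ^ p := by
      funext s
      rw [hwe s, norm_smul, Real.norm_eq_abs]
    rw [hfeq, hasDerivAt_iff_tendsto_slope]
    have hft : (|t - t| * ‖δ‖) ^ p = 0 := by
      rw [sub_self, abs_zero, zero_mul, Real.zero_rpow hp0]
    have hbound : ∀ s : ℝ,
        ‖slope (fun s : ℝ => (|s - t| * ‖δ‖) ^ p) t s‖ ≤ |s - t| ^ (p - 1) * ‖δ‖ ^ p := by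
      intro s
      rcases eq_or_ne s t with rfl | hst
      · simp [slope, hft]
        positivity
      · have hst' : s - t ≠ 0 := sub_ne_zero.mpr hst
        have habs : |s - t| ≠ 0 := abs_ne_zero.mpr hst'
        apply le_of_eq
        rw [Real.norm_eq_abs, slope_def_field, hft, sub_zero, abs_div,
          abs_of_nonneg (Real.rpow_nonneg (by positivity) p),
          Real.mul_rpow (abs_nonneg _) (norm_nonneg _), Real.rpow_sub_one habs]
        ring
    apply squeeze_zero_norm hbound
    have h1 : Filter.Tendsto (fun s : ℝ => |s - t|) (nhdsWithin t {t}ᶜ) (nhds 0) := by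
      have h0 : Filter.Tendsto (fun s : ℝ => |s - t|) (nhds t) (nhds 0) := by
        have hcont : Continuous (fun s : ℝ => |s - t|) :=
          (continuous_id.sub continuous_const).abs
        have := hcont.tendsto t
        simpa using this
      exact h0.mono_left nhdsWithin_le_nhds
    have h2 : Filter.Tendsto (fun x : ℝ => x ^ (p - 1)) (nhds 0) (nhds 0) := by
      have := (Real.continuousAt_rpow_const 0 (p - 1) (Or.inr (by linarith))).tendsto
      rwa [Real.zero_rpow (show p - 1 ≠ 0 by intro h; nlinarith)] at this
    have h3 := (h2.comp h1).mul_const (‖δ‖ ^ p)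
    simpa using h3
  · -- chain rule through ⟪c s, c s⟫ ^ (p/2)
    have hinner : HasDerivAt (fun s : ℝ => (inner ℝ (w + s • δ) (w + s • δ) : ℝ))
        ((inner ℝ (w + t • δ) δ : ℝ) + (inner ℝ δ (w + t • δ) : ℝ)) t := hc.inner ℝ hc
    have hun : 0 < ‖w + t • δ‖ := norm_pos_iff.mpr huz
    have hne : (inner ℝ (w + t • δ) (w + t • δ) : ℝ) ≠ 0 := by
      rw [real_inner_self_eq_norm_sq]
      positivity
    have hrpow := hinner.rpow_const (p := p / 2) (Or.inl hne)
    have hpow2 : ∀ v : E, (inner ℝ v v : ℝ) ^ (p / 2) = ‖v‖ ^ p := by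
      intro v
      rw [real_inner_self_eq_norm_sq, ← Real.rpow_natCast ‖v‖ 2,
        ← Real.rpow_mul (norm_nonneg _)]
      push_cast
      rw [show (2:ℝ) * (p / 2) = p by ring]
    have hfun : (fun s : ℝ => (inner ℝ (w + s • δ) (w + s • δ) : ℝ) ^ (p / 2))
        = fun s : ℝ => ‖w + s • δ‖ ^ p := funext fun s => hpow2 _
    rw [hfun] at hrpow
    convert hrpow using 1
    rw [real_inner_self_eq_norm_sq, ← Real.rpow_natCast ‖w + t • δ‖ 2,
      ← Real.rpow_mul (norm_nonneg _), real_inner_comm δ (w + t • δ)]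
    push_cast
    rw [show (2:ℝ) * (p / 2 - 1) = p - 2 by ring]
    ring

theorem convexity_ineq_p_lt_two (n : ℕ) (p : ℝ) (hp1 : 1 < p) (hp2 : p < 2) :
    ∃ C : ℝ, 0 < C ∧ ∀ w₁ w₂ : EuclideanSpace ℝ (Fin n), ¬(w₁ = 0 ∧ w₂ = 0) →
      ‖w₂‖ ^ p ≥ ‖w₁‖ ^ p
        + p * ‖w₁‖ ^ (p - 2) * (inner ℝ w₁ (w₂ - w₁) : ℝ)
        + C * ‖w₂ - w₁‖ ^ 2 / (‖w₁‖ + ‖w₂‖) ^ (2 - p) := by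
  have hp0 : 0 < p := by linarith
  refine ⟨p * (p - 1) * 2 ^ (p - 3),
    mul_pos (mul_pos hp0 (by linarith)) (Real.rpow_pos_of_pos two_pos _), ?_⟩
  intro w₁ w₂ hw
  set δ : EuclideanSpace ℝ (Fin n) := w₂ - w₁ with hδ
  set S : ℝ := ‖w₁‖ + ‖w₂‖ with hS
  have hS0 : 0 < S := by
    rcases not_and_or.mp hw with h | h
    · have h1 := norm_pos_iff.mpr h
      have h2 := norm_nonneg w₂
      rw [hS]; linarith
    · have h1 := norm_pos_iff.mpr h
      have h2 := norm_nonneg w₁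
      rw [hS]; linarith
  set K : ℝ := p * (p - 1) / 2 * ‖δ‖ ^ 2 * (2 * S) ^ (p - 2) with hK
  set c₁ : ℝ := p * ‖w₁‖ ^ (p - 2) * (inner ℝ w₁ δ : ℝ) with hc₁
  set G : ℝ → ℝ := fun t => ‖w₁ + t • δ‖ ^ p - c₁ * t - K * t ^ 2 with hGdef
  have hG' : ∀ t : ℝ, HasDerivAt G
      (p * ‖w₁ + t • δ‖ ^ (p - 2) * (inner ℝ (w₁ + t • δ) δ : ℝ) - c₁ - K * (2 * t)) t := by
    intro t
    have h1 := aux_hasDeriv hp1 hp2 w₁ δ t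
    have h2 : HasDerivAt (fun t : ℝ => c₁ * t) c₁ t := by
      simpa using (hasDerivAt_id t).const_mul c₁
    have h3 : HasDerivAt (fun t : ℝ => K * t ^ 2) (K * (2 * t)) t := by
      simpa using (hasDerivAt_pow 2 t).const_mul K
    exact (h1.sub h2).sub h3
  have hDnn : ∀ t ∈ Set.Ioo (0:ℝ) 1,
      0 ≤ p * ‖w₁ + t • δ‖ ^ (p - 2) * (inner ℝ (w₁ + t • δ) δ : ℝ) - c₁ - K * (2 * t) := by
    intro t ht
    obtain ⟨ht0, ht1⟩ := ht
    have hxy : (w₁ + t • δ) - w₁ = t • δ := by abel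
    have hstar := aux_STAR hp1 hp2 (w₁ + t • δ) w₁
    rw [hxy, real_inner_smul_right, real_inner_smul_right] at hstar
    have hns : ‖t • δ‖ ^ 2 = t ^ 2 * ‖δ‖ ^ 2 := by
      rw [norm_smul, Real.norm_eq_abs, mul_pow, sq_abs]
    rw [hns] at hstar
    have hcomb : w₁ + t • δ = (1 - t) • w₁ + t • w₂ := by
      rw [hδ, smul_sub, sub_smul, one_smul]; abel
    have hb1 : ‖w₁ + t • δ‖ ≤ ‖w₁‖ + ‖w₂‖ := by
      rw [hcomb]
      calc ‖(1 - t) • w₁ + t • w₂‖ ≤ ‖(1 - t) • w₁‖ + ‖t • w₂‖ := norm_add_le _ _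
        _ = (1 - t) * ‖w₁‖ + t * ‖w₂‖ := by
            rw [norm_smul, norm_smul, Real.norm_eq_abs, Real.norm_eq_abs,
              abs_of_nonneg (by linarith : (0:ℝ) ≤ 1 - t), abs_of_nonneg ht0.le]
        _ ≤ ‖w₁‖ + ‖w₂‖ := by
            have h5 := norm_nonneg w₁
            have h6 := norm_nonneg w₂
            nlinarith
    have hle : ‖w₁ + t • δ‖ + ‖w₁‖ ≤ 2 * S := by
      have h7 := norm_nonneg w₂
      rw [hS]
      have h8 := norm_nonneg w₁
      linarith
    have hpos : 0 < ‖w₁ + t • δ‖ + ‖w₁‖ := by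
      by_cases hw1 : w₁ = 0
      · have hw2 : w₂ ≠ 0 := fun h2 => hw ⟨hw1, h2⟩
        have hδ0 : δ ≠ 0 := by rw [hδ, hw1, sub_zero]; exact hw2
        have hne : w₁ + t • δ ≠ 0 := by
          rw [hw1, zero_add]
          exact smul_ne_zero (by linarith) hδ0
        have h9 := norm_pos_iff.mpr hne
        have h10 := norm_nonneg w₁
        linarith
      · have h9 := norm_pos_iff.mpr hw1
        have h10 := norm_nonneg (w₁ + t • δ)
        linarith
    have hmono : (2 * S) ^ (p - 2) ≤ (‖w₁ + t • δ‖ + ‖w₁‖) ^ (p - 2) :=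
      Real.rpow_le_rpow_of_nonpos hpos hle (by linarith)
    have hA : (p - 1) * (t ^ 2 * ‖δ‖ ^ 2) * (2 * S) ^ (p - 2)
        ≤ (p - 1) * (t ^ 2 * ‖δ‖ ^ 2) * (‖w₁ + t • δ‖ + ‖w₁‖) ^ (p - 2) :=
      mul_le_mul_of_nonneg_left hmono (mul_nonneg (by linarith) (by positivity))
    have hchain : (p - 1) * (t ^ 2 * ‖δ‖ ^ 2) * (2 * S) ^ (p - 2)
        ≤ t * (‖w₁ + t • δ‖ ^ (p - 2) * (inner ℝ (w₁ + t • δ) δ : ℝ)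
            - ‖w₁‖ ^ (p - 2) * (inner ℝ w₁ δ : ℝ)) := by
      linarith [hA, hstar]
    have hdiv : (p - 1) * (t * ‖δ‖ ^ 2) * (2 * S) ^ (p - 2)
        ≤ ‖w₁ + t • δ‖ ^ (p - 2) * (inner ℝ (w₁ + t • δ) δ : ℝ)
            - ‖w₁‖ ^ (p - 2) * (inner ℝ w₁ δ : ℝ) := by
      have h' : ((p - 1) * (t * ‖δ‖ ^ 2) * (2 * S) ^ (p - 2)) * t
          ≤ (‖w₁ + t • δ‖ ^ (p - 2) * (inner ℝ (w₁ + t • δ) δ : ℝ)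
              - ‖w₁‖ ^ (p - 2) * (inner ℝ w₁ δ : ℝ)) * t := by
        linarith [hchain]
      exact le_of_mul_le_mul_right h' ht0
    have hfin := mul_le_mul_of_nonneg_left hdiv hp0.le
    rw [hK, hc₁]
    linarith [hfin]
  have hcont : ContinuousOn G (Set.Icc 0 1) :=
    fun t _ => (hG' t).continuousAt.continuousWithinAt
  have hdiff : DifferentiableOn ℝ G (interior (Set.Icc (0:ℝ) 1)) :=
    fun t _ => (hG' t).differentiableAt.differentiableWithinAt
  have hmonoG : MonotoneOn G (Set.Icc 0 1) := by
    apply monotoneOn_of_deriv_nonneg (convex_Icc 0 1) hcont hdiff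
    intro x hx
    rw [interior_Icc] at hx
    rw [(hG' x).deriv]
    exact hDnn x hx
  have hG01 : G 0 ≤ G 1 :=
    hmonoG (Set.mem_Icc.mpr ⟨le_refl 0, zero_le_one⟩) (Set.mem_Icc.mpr ⟨zero_le_one, le_refl 1⟩)
      zero_le_one
  have hG0 : G 0 = ‖w₁‖ ^ p := by
    rw [hGdef]; simp
  have hw2eq : w₁ + (1:ℝ) • δ = w₂ := by rw [one_smul, hδ]; abel
  have hG1 : G 1 = ‖w₂‖ ^ p - c₁ - K := by
    rw [hGdef]
    simp only [hw2eq, one_pow, mul_one]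
  have hKC : K = p * (p - 1) * 2 ^ (p - 3) * ‖δ‖ ^ 2 / S ^ (2 - p) := by
    have h2 : (2:ℝ) ^ (p - 2) = 2 ^ (p - 3) * 2 := by
      rw [show (p - 2 : ℝ) = (p - 3) + 1 by ring, Real.rpow_add_one two_ne_zero]
    have hSn : S ^ (p - 2) = (S ^ (2 - p))⁻¹ := by
      rw [show (p - 2 : ℝ) = -(2 - p) by ring, Real.rpow_neg hS0.le]
    rw [hK, Real.mul_rpow (by norm_num : (0:ℝ) ≤ 2) hS0.le, h2, hSn]
    field_simp
  rw [ge_iff_le, ← hKC]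
  rw [hG0, hG1] at hG01
  linarith
end

section
/- Let p > 1, and fix n ≥ 2, k > 0 with k ≤ n(p-1)/((n-2)p + n). Define F(l) = ∫₀^l ω^δ (∫₀^ω f*(s) ds)^{1/(p-1)} dω where δ = 1/k - (n-1)p/(n(p-1)) and f* : [0,∞) → [0,∞) is nonnegative and measurable. Then the function h(l) = F(l)·l^{-(n-1)p/(n(p-1))} is non-decreasing on (0, ∞). -/
open MeasureTheory

set_option maxHeartbeats 1000000 in
theorem h_monotone (n : ℕ) (hn : 2 ≤ n) (p k : ℝ) (hp : 1 < p) (hk : 0 < k)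
    (hk' : k ≤ n * (p - 1) / ((n - 2) * p + n))
    (fstar : ℝ → ℝ) (hf_meas : Measurable fstar) (hf_nonneg : ∀ s, 0 ≤ fstar s)
    (hf_loc : LocallyIntegrable fstar)
    (δ : ℝ) (hδ : δ = 1 / k - (n - 1) * p / (n * (p - 1)))
    (F : ℝ → ℝ)
    (hF : F = fun l => ∫ ω in Set.Ioc (0 : ℝ) l,
        ω ^ δ * (∫ s in Set.Ioc (0 : ℝ) ω, fstar s) ^ (1 / (p - 1))) :
    ∀ a ∈ Set.Ioi (0 : ℝ), ∀ b ∈ Set.Ioi (0 : ℝ), a ≤ b →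
      F a * a ^ (-((n - 1) * p / (n * (p - 1)))) ≤
        F b * b ^ (-((n - 1) * p / (n * (p - 1)))) := by
  intro a ha b hb hab
  simp only [Set.mem_Ioi] at ha hb
  have hp1 : (0:ℝ) < p - 1 := by linarith
  have hn2 : (2:ℝ) ≤ (n:ℝ) := by exact_mod_cast hn
  set γ : ℝ := (n - 1) * p / (n * (p - 1)) with hγdef
  have hden : (0:ℝ) < (n:ℝ) * (p - 1) := by positivity
  have hγpos : 0 < γ := by
    apply div_pos (by nlinarith) hden
  have hden2 : (0:ℝ) < ((n:ℝ) - 2) * p + n := by nlinarith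
  have h1k : (((n:ℝ) - 2) * p + n) / ((n:ℝ) * (p - 1)) ≤ 1 / k := by
    have := one_div_le_one_div_of_le hk hk'
    rwa [one_div_div] at this
  have hδγ : γ ≤ δ + 1 := by
    have h2γ : 2 * γ - 1 = (((n:ℝ) - 2) * p + n) / ((n:ℝ) * (p - 1)) := by
      rw [hγdef, eq_div_iff hden.ne', sub_mul, mul_assoc, div_mul_cancel₀ _ hden.ne']
      ring
    rw [hδ]
    linarith
  have hδ1 : (-1:ℝ) < δ := by linarith
  have hd : (0:ℝ) < δ + 1 := by linarith
  -- G and its properties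
  set G : ℝ → ℝ := fun ω => ∫ s in Set.Ioc (0:ℝ) ω, fstar s with hGdef
  have hGint : ∀ ω : ℝ, IntegrableOn fstar (Set.Ioc 0 ω) := by
    intro ω
    rcases le_or_gt ω 0 with h | h
    · rw [Set.Ioc_eq_empty (by simpa using h)]; exact integrableOn_empty
    · exact (hf_loc.integrableOn_isCompact isCompact_Icc).mono_set
        Set.Ioc_subset_Icc_self
  have hGmono : Monotone G := by
    intro x y hxy
    exact setIntegral_mono_set (hGint y)
      (Filter.Eventually.of_forall hf_nonneg)
      ((Set.Ioc_subset_Ioc_right hxy).eventuallyLE)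
  have hGnonneg : ∀ ω, 0 ≤ G ω := fun ω =>
    setIntegral_nonneg measurableSet_Ioc (fun x _ => hf_nonneg x)
  set σ : ℝ := 1 / (p - 1) with hσdef
  have hσpos : 0 < σ := by positivity
  set g : ℝ → ℝ := fun ω => ω ^ δ * G ω ^ σ with hgdef
  have hGσmeas : Measurable fun ω => G ω ^ σ :=
    (Real.continuous_rpow_const hσpos.le).measurable.comp hGmono.measurable
  have hgaesm : ∀ l : ℝ, AEStronglyMeasurable g (volume.restrict (Set.Ioc 0 l)) := by
    intro l
    refine AEStronglyMeasurable.mul ?_ hGσmeas.aestronglyMeasurable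
    exact ContinuousOn.aestronglyMeasurable
      (fun x hx => (Real.continuousAt_rpow_const x δ
        (Or.inl (ne_of_gt hx.1))).continuousWithinAt) measurableSet_Ioc
  have hgnonneg : ∀ ω : ℝ, 0 < ω → 0 ≤ g ω := fun ω hω =>
    mul_nonneg (Real.rpow_nonneg hω.le δ) (Real.rpow_nonneg (hGnonneg ω) σ)
  have hrpow_int : ∀ l : ℝ, 0 ≤ l → IntegrableOn (fun ω : ℝ => ω ^ δ) (Set.Ioc 0 l) := by
    intro l hl
    exact (intervalIntegrable_iff_integrableOn_Ioc_of_le hl).mp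
      (intervalIntegral.intervalIntegrable_rpow' hδ1)
  have hgint : ∀ l : ℝ, 0 < l → IntegrableOn g (Set.Ioc 0 l) := by
    intro l hl
    refine Integrable.mono' (((hrpow_int l hl.le).const_mul (G l ^ σ)))
      (hgaesm l) ?_
    rw [ae_restrict_iff' measurableSet_Ioc]
    refine Filter.Eventually.of_forall (fun ω hω => ?_)
    rw [Real.norm_eq_abs, abs_of_nonneg (hgnonneg ω hω.1)]
    rw [hgdef]
    simp only
    rw [mul_comm (G l ^ σ)]
    exact mul_le_mul_of_nonneg_left
      (Real.rpow_le_rpow (hGnonneg ω) (hGmono hω.2) hσpos.le)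
      (Real.rpow_nonneg hω.1.le δ)
  have hga : IntegrableOn g (Set.Ioc 0 a) := hgint a ha
  have hgb : IntegrableOn g (Set.Ioc 0 b) := hgint b hb
  have hgab : IntegrableOn g (Set.Ioc a b) :=
    hgb.mono_set (Set.Ioc_subset_Ioc_left ha.le)
  -- split
  have hFg : ∀ l, F l = ∫ ω in Set.Ioc (0:ℝ) l, g ω := by
    intro l; rw [hF]
  set I : ℝ := ∫ ω in Set.Ioc a b, g ω with hIdef
  have hsplit : F b = F a + I := by
    rw [hFg, hFg, hIdef, ← setIntegral_union (Set.Ioc_disjoint_Ioc_of_le le_rfl)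
      measurableSet_Ioc hga hgab, Set.Ioc_union_Ioc_eq_Ioc ha.le hab]
  -- pointwise bounds
  set c : ℝ := G a ^ σ with hcdef
  have hc : 0 ≤ c := Real.rpow_nonneg (hGnonneg a) σ
  have hJ0a : (∫ ω in Set.Ioc (0:ℝ) a, ω ^ δ) = a ^ (δ + 1) / (δ + 1) := by
    rw [← intervalIntegral.integral_of_le ha.le, integral_rpow (Or.inl hδ1),
      Real.zero_rpow (ne_of_gt hd), sub_zero]
  have hJab : (∫ ω in Set.Ioc a b, ω ^ δ) = (b ^ (δ + 1) - a ^ (δ + 1)) / (δ + 1) := by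
    rw [← intervalIntegral.integral_of_le hab, integral_rpow (Or.inl hδ1)]
  have hA : F a ≤ c * (a ^ (δ + 1) / (δ + 1)) := by
    rw [hFg, ← hJ0a, ← integral_const_mul]
    refine setIntegral_mono_on hga ((hrpow_int a ha.le).const_mul c)
      measurableSet_Ioc (fun ω hω => ?_)
    rw [hgdef]
    simp only
    rw [mul_comm c]
    exact mul_le_mul_of_nonneg_left
      (Real.rpow_le_rpow (hGnonneg ω) (hGmono hω.2) hσpos.le)
      (Real.rpow_nonneg hω.1.le δ)
  have hI : c * ((b ^ (δ + 1) - a ^ (δ + 1)) / (δ + 1)) ≤ I := by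
    rw [hIdef, ← hJab, ← integral_const_mul]
    refine setIntegral_mono_on
      (((hrpow_int b hb.le).mono_set (Set.Ioc_subset_Ioc_left ha.le)).const_mul c)
      hgab measurableSet_Ioc (fun ω hω => ?_)
    rw [hgdef]
    simp only
    rw [mul_comm c]
    exact mul_le_mul_of_nonneg_left
      (Real.rpow_le_rpow (hGnonneg a) (hGmono hω.1.le) hσpos.le)
      (Real.rpow_nonneg (lt_trans ha hω.1).le δ)
  -- final algebra
  have hFa_nonneg : 0 ≤ F a := by
    rw [hFg]; exact setIntegral_nonneg measurableSet_Ioc (fun ω hω => hgnonneg ω hω.1)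
  have hvu : b ^ (-γ) ≤ a ^ (-γ) :=
    Real.rpow_le_rpow_of_nonpos ha hab (neg_nonpos.mpr hγpos.le)
  have hv : (0:ℝ) ≤ b ^ (-γ) := Real.rpow_nonneg hb.le _
  have key : a ^ (δ + 1) * a ^ (-γ) ≤ b ^ (δ + 1) * b ^ (-γ) := by
    rw [← Real.rpow_add ha, ← Real.rpow_add hb]
    exact Real.rpow_le_rpow ha.le hab (by linarith)
  rw [hsplit]
  set u := a ^ (-γ)
  set v := b ^ (-γ)
  set x := a ^ (δ + 1)
  set y := b ^ (δ + 1)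
  have hcd : 0 ≤ c / (δ + 1) := div_nonneg hc hd.le
  have e1 : F a * (u - v) ≤ c * (x / (δ + 1)) * (u - v) :=
    mul_le_mul_of_nonneg_right hA (sub_nonneg.mpr hvu)
  have e2 : c * (x / (δ + 1)) * (u - v) ≤ c * ((y - x) / (δ + 1)) * v := by
    have h3 : x * (u - v) ≤ (y - x) * v := by nlinarith [key]
    calc c * (x / (δ + 1)) * (u - v) = c / (δ + 1) * (x * (u - v)) := by ring
      _ ≤ c / (δ + 1) * ((y - x) * v) := mul_le_mul_of_nonneg_left h3 hcd
      _ = c * ((y - x) / (δ + 1)) * v := by ring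
  have e3 : c * ((y - x) / (δ + 1)) * v ≤ I * v := mul_le_mul_of_nonneg_right hI hv
  nlinarith [e1, e2, e3]
end

section
/- Let n ≥ 2, p > 1, α = 1/(p-1), β > 0 and define h(r) = (nβ)^{-α}((1+rⁿ)^{-(n-1)/(n(p-1))} - 1) + ((p-1)/(n^α(p-n)))((1+rⁿ)^{(p-n)/(n(p-1))} - 1) for p ≠ n. Then as r → 0⁺, h(r) = (-(nβ)^{-α}(n-1)/(n(p-1)) + n^{-α-1})·rⁿ + o(rⁿ). In particular, if β < ((n-1)/(p-1))^{p-1}, the coefficient of rⁿ is negative, so h(r) < 0 for all sufficiently small r > 0. -/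
open Asymptotics

lemma rpow_taylor (n : ℕ) (hn : n ≠ 0) (δ : ℝ) :
    (fun r : ℝ => (1 + r ^ n) ^ δ - 1 - δ * r ^ n) =o[nhdsWithin 0 (Set.Ioi 0)]
      (fun r => r ^ n) := by
  have h1 : HasDerivAt (fun y : ℝ => (1 + y) ^ δ) δ 0 := by
    have h0 : HasDerivAt (fun y : ℝ => 1 + y) 1 0 := by
      simpa using (hasDerivAt_id (0:ℝ)).const_add 1
    have h2 := h0.rpow_const (p := δ) (by norm_num)
    simpa using h2
  have h3 := (hasDerivAt_iff_isLittleO.mp h1)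
  simp only [sub_zero, add_zero, Real.one_rpow, smul_eq_mul] at h3
  have t : Filter.Tendsto (fun r : ℝ => r ^ n) (nhdsWithin 0 (Set.Ioi 0)) (nhds 0) := by
    have := ((continuous_pow n).tendsto (0:ℝ)).mono_left
      (nhdsWithin_le_nhds (s := Set.Ioi 0))
    simpa [zero_pow hn] using this
  have := h3.comp_tendsto t
  simpa [Function.comp_def, mul_comm] using this

theorem h_asymptotics (n : ℕ) (hn : 2 ≤ n) (p : ℝ) (hp : 1 < p)
    (hpn : p ≠ (n : ℝ)) (α : ℝ) (hα : α = 1 / (p - 1)) (β : ℝ) (hβ : 0 < β)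
    (h : ℝ → ℝ)
    (hh : h = fun r => ((n : ℝ) * β) ^ (-α) *
        ((1 + r ^ (n : ℕ)) ^ (-(((n : ℝ) - 1) / ((n : ℝ) * (p - 1)))) - 1)
      + (p - 1) / ((n : ℝ) ^ α * (p - n)) *
        ((1 + r ^ (n : ℕ)) ^ ((p - (n : ℝ)) / ((n : ℝ) * (p - 1))) - 1))
    (c : ℝ)
    (hc : c = -((n : ℝ) * β) ^ (-α) * ((n : ℝ) - 1) / ((n : ℝ) * (p - 1))
        + (n : ℝ) ^ (-α - 1)) :
    (fun r => h r - c * r ^ (n : ℕ)) =o[nhdsWithin 0 (Set.Ioi 0)]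
      (fun r => r ^ (n : ℕ)) ∧
    (β < (((n : ℝ) - 1) / (p - 1)) ^ (p - 1) →
      c < 0 ∧ ∃ ε > 0, ∀ r ∈ Set.Ioo (0 : ℝ) ε, h r < 0) := by
  have hn0 : n ≠ 0 := by omega
  have npos : (0:ℝ) < n := by exact_mod_cast Nat.pos_of_ne_zero hn0
  have hp1 : (0:ℝ) < p - 1 := by linarith
  have hpn' : p - (n:ℝ) ≠ 0 := sub_ne_zero.mpr hpn
  have hnα : (0:ℝ) < (n:ℝ) ^ α := Real.rpow_pos_of_pos npos α
  set A : ℝ := ((n : ℝ) * β) ^ (-α) with hA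
  set a : ℝ := -(((n : ℝ) - 1) / ((n : ℝ) * (p - 1))) with ha
  set B : ℝ := (p - 1) / ((n : ℝ) ^ α * (p - n)) with hB
  set b : ℝ := (p - (n : ℝ)) / ((n : ℝ) * (p - 1)) with hb
  have hnkey : (n:ℝ) ^ (-α - 1) = 1 / ((n:ℝ) ^ α * n) := by
    rw [show -α - 1 = -(α + 1) by ring, Real.rpow_neg npos.le, Real.rpow_add npos,
      Real.rpow_one, one_div]
  have hcab : c = A * a + B * b := by
    rw [hc, hA, ha, hB, hb, hnkey]
    field_simp
  have o1 := rpow_taylor n hn0 a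
  have o2 := rpow_taylor n hn0 b
  have O : (fun r => h r - c * r ^ (n : ℕ)) =o[nhdsWithin 0 (Set.Ioi 0)]
      (fun r => r ^ (n : ℕ)) := by
    have := (o1.const_mul_left A).add (o2.const_mul_left B)
    refine this.congr' (by filter_upwards with r; rw [hh, hcab]; ring) (by rfl)
  refine ⟨O, fun hβ2 => ?_⟩
  -- show c < 0
  set K : ℝ := ((n:ℝ) - 1) / (p - 1) with hK
  have hn2 : (2:ℝ) ≤ n := by exact_mod_cast hn
  have hKpos : 0 < K := div_pos (by linarith) hp1
  have hαpos : 0 < α := by rw [hα]; positivity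
  have hβα : β ^ α < K := by
    have h2 := Real.rpow_lt_rpow hβ.le hβ2 hαpos
    rwa [← Real.rpow_mul hKpos.le,
      show (p - 1) * α = 1 by rw [hα]; field_simp, Real.rpow_one] at h2
  have hβαpos : 0 < β ^ α := Real.rpow_pos_of_pos hβ α
  have h1K : 1 < β ^ (-α) * K := by
    rw [Real.rpow_neg hβ.le]
    rw [show (β ^ α)⁻¹ * K = K / β ^ α by ring]
    exact (one_lt_div hβαpos).mpr hβα
  have hcfac : c = (n:ℝ) ^ (-α) / n * (1 - β ^ (-α) * K) := by
    rw [hc, hA, Real.mul_rpow npos.le hβ.le, hnkey, hK,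
      show (n:ℝ) ^ (-α) = ((n:ℝ) ^ α)⁻¹ by rw [Real.rpow_neg npos.le]]
    field_simp
    ring
  have hcneg : c < 0 := by
    rw [hcfac]
    apply mul_neg_of_pos_of_neg
    · positivity
    · linarith
  refine ⟨hcneg, ?_⟩
  have hev : ∀ᶠ r in nhdsWithin 0 (Set.Ioi 0),
      ‖h r - c * r ^ (n:ℕ)‖ ≤ (-c/2) * ‖r ^ (n:ℕ)‖ :=
    O.def (by linarith)
  rw [Filter.eventually_iff, Metric.mem_nhdsWithin_iff] at hev
  obtain ⟨ε, hε, hev⟩ := hev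
  refine ⟨ε, hε, fun r hr => ?_⟩
  obtain ⟨hr0, hrε⟩ := hr
  have hrn : 0 < r ^ n := pow_pos hr0 n
  have := hev ⟨by simpa [Real.dist_eq, abs_of_pos hr0] using hrε, hr0⟩
  simp only [Set.mem_setOf_eq, Real.norm_eq_abs, abs_of_pos hrn] at this
  have habs := abs_le.mp this
  nlinarith [habs.2, mul_pos (neg_pos.mpr hcneg) hrn]
end
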